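/- arXiv:1808.08162 — 4 statements merged into one kernel-verified Lean document; each statement's English description precedes it below -/
import Mathlib

section
/- Let S be a subsemigroup of ((0,∞),+), let u,v ∈ ℕ, and let A be a u×v matrix with rational entries that is image partition regular over S. Then I(A;S) is a subsemigroup of (βS,+); that is, if p,q ∈ I(A;S) then p+q ∈ I(A;S). -/
noncomputable section

/-- Addition of ultrafilters on ℝ: `B ∈ uAdd p q ↔ {x | {y | x + y ∈ B} ∈ q} ∈ p`. -/
def uAdd (p q : Ultrafilter ℝ) : Ultrafilter ℝ :=
  p.bind fun x => q.map fun y => x + y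

/-- `S` is a subsemigroup of `((0,∞),+)`. -/
def IsPosSubsemigroup (S : Set ℝ) : Prop :=
  S.Nonempty ∧ S ⊆ Set.Ioi 0 ∧ ∀ x ∈ S, ∀ y ∈ S, x + y ∈ S

/-- `0` is a limit point of `S`. -/
def DenseNearZero (S : Set ℝ) : Prop := ∀ ε > 0, ∃ x ∈ S, x < ε

/-- the `i`-th entry of `A x⃗`. -/
def mEntry {ι κ : Type} (A : ι → κ → ℚ) (x : κ → ℝ) (i : ι) : ℝ :=
  ∑ᶠ j, (A i j : ℝ) * x j

/-- admissible matrix: no zero row, finitely many nonzero entries in each row. -/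
def Admissible {ι κ : Type} (A : ι → κ → ℚ) : Prop :=
  (∀ i, A i ≠ 0) ∧ ∀ i, (Function.support (A i)).Finite

/-- `A` is image partition regular over `S`. -/
def IPRover {ι κ : Type} (S : Set ℝ) (A : ι → κ → ℚ) : Prop :=
  ∀ (k : ℕ) (c : ℝ → Fin (k + 1)), ∃ x : κ → ℝ, (∀ j, x j ∈ S) ∧
    ∃ m : Fin (k + 1), ∀ i, mEntry A x i ∈ S \ {0} ∧ c (mEntry A x i) = m

/-- `A` is image partition regular near zero over `S`. -/
def IPRNearZero {ι κ : Type} (S : Set ℝ) (A : ι → κ → ℚ) : Prop :=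
  ∀ (k : ℕ) (c : ℝ → Fin (k + 1)), ∀ δ > (0 : ℝ), ∃ x : κ → ℝ, (∀ j, x j ∈ S) ∧
    ∃ m : Fin (k + 1), ∀ i, mEntry A x i ∈ S \ {0} ∧
      mEntry A x i ∈ Set.Ioo 0 δ ∧ c (mEntry A x i) = m

/-- `I(A;S)`. -/
def ISet {ι κ : Type} (S : Set ℝ) (A : ι → κ → ℚ) : Set (Ultrafilter ℝ) :=
  {p | S ∈ p ∧ ∀ P ∈ p, ∃ x : κ → ℝ, (∀ j, x j ∈ S) ∧ ∀ i, mEntry A x i ∈ P}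

/-- `O⁺(S)`. -/
def Oplus (S : Set ℝ) : Set (Ultrafilter ℝ) :=
  {p | ∀ ε > (0 : ℝ), Set.Ioo 0 ε ∩ S ∈ p}

/-- `I₀(A;S)`. -/
def I0Set {ι κ : Type} (S : Set ℝ) (A : ι → κ → ℚ) : Set (Ultrafilter ℝ) :=
  {p | S ∈ p ∧ ∀ P ∈ p, ∀ ε > (0 : ℝ), ∃ x : κ → ℝ, (∀ j, x j ∈ S) ∧
      ∀ i, mEntry A x i ∈ P ∩ Set.Ioo 0 ε}

/-- multiplication of an ultrafilter by a real constant. -/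
def mulU (c : ℝ) (p : Ultrafilter ℝ) : Ultrafilter ℝ := p.map fun x => c * x

/-- `q·p = q-lim_{n} (n·p)` for `q ∈ βℕ`, `p ∈ βℝ`. -/
def actU (q : Ultrafilter ℕ) (p : Ultrafilter ℝ) : Ultrafilter ℝ :=
  q.bind fun n => p.map fun x => (n : ℝ) * x

/-- `I` is a two-sided ideal of `T ⊆ βℝ`. -/
def IsIdealIn (T I : Set (Ultrafilter ℝ)) : Prop :=
  I.Nonempty ∧ I ⊆ T ∧ ∀ p ∈ T, ∀ q ∈ I, uAdd p q ∈ I ∧ uAdd q p ∈ I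

/-- the smallest two-sided ideal of `T`. -/
def KK (T : Set (Ultrafilter ℝ)) : Set (Ultrafilter ℝ) :=
  ⋂₀ {I | IsIdealIn T I}

/-- `L` is a left ideal of `T`. -/
def IsLeftIdealIn (T L : Set (Ultrafilter ℝ)) : Prop :=
  L.Nonempty ∧ L ⊆ T ∧ ∀ p ∈ T, ∀ q ∈ L, uAdd p q ∈ L

/-- `L` is a minimal left ideal of `T`. -/
def IsMinLeftIdealIn (T L : Set (Ultrafilter ℝ)) : Prop :=
  IsLeftIdealIn T L ∧ ∀ L', IsLeftIdealIn T L' → L' ⊆ L → L' = L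

/-- `C ⊆ S` is central near zero. -/
def CentralNearZero (S C : Set ℝ) : Prop :=
  ∃ p : Ultrafilter ℝ, p ∈ KK (Oplus S) ∧ uAdd p p = p ∧ C ∈ p

/-- `C` is central* near zero: it belongs to every minimal idempotent of `O⁺(S)`. -/
def CentralStarNearZero (S C : Set ℝ) : Prop :=
  ∀ p : Ultrafilter ℝ, p ∈ KK (Oplus S) → uAdd p p = p → C ∈ p

/-- `C` is IP* near zero: it belongs to every idempotent of `O⁺(S)`. -/
def IPStarNearZero (S C : Set ℝ) : Prop :=
  ∀ p : Ultrafilter ℝ, p ∈ Oplus S → uAdd p p = p → C ∈ p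

/-- `A` is centrally image partition regular near zero over `S`. -/
def CIPRNearZero {ι κ : Type} (S : Set ℝ) (A : ι → κ → ℚ) : Prop :=
  ∀ C : Set ℝ, CentralNearZero S C →
    ∃ x : κ → ℝ, (∀ j, x j ∈ S) ∧ ∀ i, mEntry A x i ∈ C

/-- `T` is thick near zero in `S`. -/
def ThickNearZero (S T : Set ℝ) : Prop :=
  ∃ L : Set (Ultrafilter ℝ), IsLeftIdealIn (Oplus S) L ∧ ∀ p ∈ L, T ∈ p

/-- membership in the class `𝓜₀(S)`. -/
def MemM0 {ι κ : Type} (S : Set ℝ) (A : ι → κ → ℚ) : Prop :=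
  Admissible A ∧ ∀ T : Set ℝ, ThickNearZero S T →
    ∀ (k : ℕ) (c : ℝ → Fin (k + 1)), ∃ x : κ → ℝ, (∀ j, x j ∈ S) ∧
      ∃ m : Fin (k + 1), ∀ i, mEntry A x i ∈ T ∧ c (mEntry A x i) = m

/-- `A` is (finite) image partition regular (over ℕ). -/
def IPRoverNat {u v : ℕ} (A : Fin u → Fin v → ℚ) : Prop :=
  ∀ (k : ℕ) (c : ℕ → Fin (k + 1)), ∃ x : Fin v → ℕ, ∃ m : Fin (k + 1),
    ∀ i, ∃ n : ℕ, 0 < n ∧ (n : ℚ) = ∑ j, A i j * (x j : ℚ) ∧ c n = m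

/-- the compressed form of a finitely supported integer vector: delete the zeros,
then collapse equal consecutive entries. -/
def compress (r : ℕ → ℤ) (hr : (Function.support r).Finite) : List ℤ :=
  ((hr.toFinset.sort (· ≤ ·)).map r).destutter (· ≠ ·)

/-- `M` is the Milliken–Taylor matrix `MT(a⃗)`: its rows are exactly the finitely
supported integer vectors with compressed form `a⃗`. -/
def IsMTMatrix (a : List ℤ) (M : ℕ → ℕ → ℚ) : Prop :=
  (∀ i, ∃ (r : ℕ → ℤ) (hr : (Function.support r).Finite),
      (M i = fun j => (r j : ℚ)) ∧ compress r hr = a) ∧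
  ∀ (r : ℕ → ℤ) (hr : (Function.support r).Finite),
    compress r hr = a → ∃ i, M i = fun j => (r j : ℚ)

/-- the sum `f 0 + (f 1 + (⋯ + f k))` in `(βℝ, +)`. -/
def finSumU : ∀ {k : ℕ}, (Fin (k + 1) → Ultrafilter ℝ) → Ultrafilter ℝ
  | 0, f => f 0
  | _ + 1, f => uAdd (f 0) (finSumU fun i => f i.succ)

end

/-- If `A` is a finite matrix which is image partition regular over a
subsemigroup `S` of `((0,∞),+)`, then `I(A;S)` is a subsemigroup of `(βS,+)`. -/
theorem stmt1 (S : Set ℝ) (hS : IsPosSubsemigroup S) (u v : ℕ)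
    (A : Fin u → Fin v → ℚ) (hA : IPRover S A) :
    ∀ p ∈ ISet S A, ∀ q ∈ ISet S A, uAdd p q ∈ ISet S A := by
  obtain ⟨-, -, hclose⟩ := hS
  have hmem : ∀ (p q : Ultrafilter ℝ) (B : Set ℝ),
      B ∈ uAdd p q ↔ {x | {y | x + y ∈ B} ∈ q} ∈ p := by
    intro p q B
    rfl
  have hlin : ∀ (x y : Fin v → ℝ) (i : Fin u),
      mEntry A (fun j => x j + y j) i = mEntry A x i + mEntry A y i := by
    intro x y i
    simp only [mEntry, finsum_eq_sum_of_fintype, mul_add, Finset.sum_add_distrib]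
  rintro p ⟨hpS, hp⟩ q ⟨hqS, hq⟩
  constructor
  · rw [hmem]
    apply Filter.mem_of_superset hpS
    intro x hx
    exact Filter.mem_of_superset hqS fun y hy => hclose x hx y hy
  · intro P hP
    rw [hmem] at hP
    obtain ⟨x, hxS, hx⟩ := hp _ hP
    have hQ : (⋂ i, {y : ℝ | mEntry A x i + y ∈ P}) ∈ q :=
      Filter.iInter_mem.2 fun i => hx i
    obtain ⟨y, hyS, hy⟩ := hq _ hQ
    refine ⟨fun j => x j + y j, fun j => hclose _ (hxS j) _ (hyS j), fun i => ?_⟩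
    rw [hlin]
    exact Set.mem_iInter.1 (hy i) i
end

section
/- Let S be a dense subsemigroup of ((0,∞),+), let u,v ∈ ℕ ∪ {ω}, and let A be a u×v admissible matrix. Then I₀(A;S) is compact, and I₀(A;S) ≠ ∅ if and only if A is image partition regular near zero over S. Moreover, if u,v ∈ ℕ and A is image partition regular near zero over S, then I₀(A;S) is a subsemigroup of (βS,+). -/
section myAux

private lemma mem_uAdd' {p q : Ultrafilter ℝ} {s : Set ℝ} :
    s ∈ uAdd p q ↔ {x : ℝ | {y : ℝ | x + y ∈ s} ∈ q} ∈ p := Iff.rfl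

private lemma exists_color_mem' {k : ℕ} (c : ℝ → Fin (k + 1)) (p : Ultrafilter ℝ) :
    ∃ m, c ⁻¹' {m} ∈ p := by
  by_contra h
  push_neg at h
  have h2 : ∀ m, (c ⁻¹' {m})ᶜ ∈ p := fun m => Ultrafilter.compl_mem_iff_notMem.2 (h m)
  have h3 : (⋂ m, (c ⁻¹' {m})ᶜ) ∈ p := Filter.iInter_mem.2 h2
  have h4 : (⋂ m, (c ⁻¹' {m})ᶜ : Set ℝ) = ∅ := by
    ext y; simp only [Set.mem_iInter, Set.mem_compl_iff, Set.mem_preimage,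
      Set.mem_singleton_iff, Set.mem_empty_iff_false, iff_false, not_forall, not_not]
    exact ⟨c y, rfl⟩
  rw [h4] at h3
  exact (Filter.empty_notMem _) h3

private lemma mEntry_add' {u v : ℕ} (B : Fin u → Fin v → ℚ) (x y : Fin v → ℝ) (i : Fin u) :
    mEntry B (fun j => x j + y j) i = mEntry B x i + mEntry B y i := by
  unfold mEntry
  rw [finsum_eq_sum_of_fintype, finsum_eq_sum_of_fintype, finsum_eq_sum_of_fintype,
    ← Finset.sum_add_distrib]
  exact Finset.sum_congr rfl fun j _ => by ring

end myAux

/-- `I₀(A;S)` is compact, is nonempty iff `A` is image partition regular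
near zero over `S`; and for finite matrices that are image partition regular near zero
over `S`, `I₀(A;S)` is a subsemigroup of `(βS,+)`. -/
theorem stmt3 {ι κ : Type} [Countable ι] [Countable κ] (S : Set ℝ)
    (hS : IsPosSubsemigroup S) (hd : DenseNearZero S)
    (A : ι → κ → ℚ) (hA : Admissible A) :
    IsCompact (I0Set S A) ∧ ((I0Set S A).Nonempty ↔ IPRNearZero S A) ∧
      (∀ (u v : ℕ) (B : Fin u → Fin v → ℚ), IPRNearZero S B →
        ∀ p ∈ I0Set S B, ∀ q ∈ I0Set S B, uAdd p q ∈ I0Set S B) := by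
  classical
  obtain ⟨s₀, hs₀⟩ := hS.1
  set Bad : Set (Set ℝ) := {P | ∃ ε > (0:ℝ), ¬ ∃ x : κ → ℝ, (∀ j, x j ∈ S) ∧
      ∀ i, mEntry A x i ∈ P ∩ Set.Ioo 0 ε} with hBadDef
  have hchar : ∀ p : Ultrafilter ℝ, p ∈ I0Set S A ↔ (S ∈ p ∧ ∀ P ∈ Bad, Pᶜ ∈ p) := by
    intro p
    constructor
    · rintro ⟨h1, h2⟩
      refine ⟨h1, fun P hP => ?_⟩
      obtain ⟨ε, hε, hno⟩ := hP
      by_contra hc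
      exact hno (h2 P (Ultrafilter.compl_notMem_iff.1 hc) ε hε)
    · rintro ⟨h1, h2⟩
      refine ⟨h1, fun P hP ε hε => ?_⟩
      by_contra hno
      exact (Ultrafilter.compl_notMem_iff.2 hP) (h2 P ⟨ε, hε, hno⟩)
  refine ⟨?_, ?_, ?_⟩
  · -- compactness
    have heq : I0Set S A =
        {p : Ultrafilter ℝ | S ∈ p} ∩ ⋂ P ∈ Bad, {p : Ultrafilter ℝ | Pᶜ ∈ p} := by
      ext p
      simp only [Set.mem_inter_iff, Set.mem_iInter, Set.mem_setOf_eq]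
      exact hchar p
    rw [heq]
    exact ((ultrafilter_isClosed_basic S).inter
      (isClosed_biInter fun P _ => ultrafilter_isClosed_basic Pᶜ)).isCompact
  · constructor
    · -- nonempty → IPR near zero
      rintro ⟨p, hp⟩ k c δ hδ
      obtain ⟨h1, h2⟩ := hp
      obtain ⟨m, hm⟩ := exists_color_mem' c p
      obtain ⟨x, hx, hxe⟩ := h2 (S ∩ c ⁻¹' {m}) (Filter.inter_mem h1 hm) δ hδ
      refine ⟨x, hx, m, fun i => ?_⟩
      obtain ⟨⟨hS', hcm⟩, hio⟩ := hxe i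
      exact ⟨⟨hS', fun h0 => (ne_of_gt hio.1) (Set.mem_singleton_iff.1 h0)⟩, hio, hcm⟩
    · -- IPR near zero → nonempty
      intro hIPR
      have hFIP : ∀ t : Set (Set ℝ), t ⊆ insert S (compl '' Bad) → t.Finite →
          (⋂₀ t).Nonempty := by
        intro t ht htf
        set PC : Set (Set ℝ) := compl '' (t \ {S}) with hPCdef
        have hPCBad : PC ⊆ Bad := by
          rintro _ ⟨s, ⟨hst, hsS⟩, rfl⟩
          rcases ht hst with rfl | ⟨P, hP, rfl⟩
          · exact absurd rfl hsS
          · rwa [compl_compl]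
        have hPCfin : PC.Finite := htf.diff.image _
        -- a point of S avoiding all members of PC suffices
        suffices hsuff : ∃ z ∈ S, ∀ P ∈ PC, z ∉ P by
          obtain ⟨z, hzS, hz⟩ := hsuff
          refine ⟨z, fun s hst => ?_⟩
          by_cases hsS : s = S
          · exact hsS ▸ hzS
          · have : sᶜ ∈ PC := ⟨s, ⟨hst, hsS⟩, rfl⟩
            exact not_not.1 (hz sᶜ this)
        rcases Set.eq_empty_or_nonempty PC with hPe | hPne
        · exact ⟨s₀, hs₀, fun P hP => by rw [hPe] at hP; exact hP.elim⟩
        · -- enumerate PC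
          obtain ⟨k, hk⟩ : ∃ k, hPCfin.toFinset.card = k + 1 :=
            Nat.exists_eq_succ_of_ne_zero (by
              simp only [ne_eq, Finset.card_eq_zero, ← Finset.not_nonempty_iff_eq_empty, not_not]
              exact hPCfin.toFinset_nonempty.2 hPne)
          set e := hPCfin.toFinset.equivFin with he
          set f : Fin (k + 1) → Set ℝ := fun i => (e.symm (Fin.cast hk.symm i) : Set ℝ) with hf
          have hfmem : ∀ i, f i ∈ Bad := fun i =>
            hPCBad (hPCfin.mem_toFinset.1 (e.symm (Fin.cast hk.symm i)).2)
          have hfsurj : ∀ P ∈ PC, ∃ i, f i = P := by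
            intro P hP
            refine ⟨Fin.cast hk (e ⟨P, hPCfin.mem_toFinset.2 hP⟩), ?_⟩
            simp [hf]
          -- choose the ε's
          have hbad : ∀ i : Fin (k + 1), ∃ ε > (0:ℝ), ¬ ∃ x : κ → ℝ, (∀ j, x j ∈ S) ∧
              ∀ i0, mEntry A x i0 ∈ f i ∩ Set.Ioo 0 ε := fun i => hfmem i
          choose ε hεpos hno using hbad
          have hι : Nonempty ι := by
            by_contra hni
            rw [not_nonempty_iff] at hni
            exact hno 0 ⟨fun _ => s₀, fun _ => hs₀, fun i0 => (hni.false i0).elim⟩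
          set δ : ℝ := Finset.univ.inf' ⟨0, Finset.mem_univ 0⟩ ε with hδdef
          have hδpos : 0 < δ := (Finset.lt_inf'_iff _).2 fun i _ => hεpos i
          have hδle : ∀ i, δ ≤ ε i := fun i => Finset.inf'_le _ (Finset.mem_univ i)
          -- the coloring
          set c : ℝ → Fin (k + 2) := fun y =>
            if h : ∃ i : Fin (k + 1), y ∈ f i then h.choose.succ else 0 with hc
          obtain ⟨x, hx, m, hm⟩ := hIPR (k + 1) c δ hδpos
          by_cases hm0 : m = 0
          · -- all entries avoid all f i
            have havoid : ∀ i0 : ι, ∀ i, mEntry A x i0 ∉ f i := by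
              intro i0 i hmem
              have hex : ∃ i, mEntry A x i0 ∈ f i := ⟨i, hmem⟩
              have := (hm i0).2.2
              rw [hc] at this
              simp only [dif_pos hex] at this
              rw [hm0] at this
              exact (Fin.succ_ne_zero _) this
            obtain ⟨i0⟩ := hι
            refine ⟨mEntry A x i0, (hm i0).1.1, fun P hP hmem => ?_⟩
            obtain ⟨i, rfl⟩ := hfsurj P hP
            exact havoid i0 i hmem
          · -- all entries lie in a single f i₀ : contradiction
            obtain ⟨j₀, hj₀⟩ : ∃ j₀ : Fin (k + 1), m = j₀.succ := by
              rcases Fin.eq_succ_of_ne_zero hm0 with ⟨j₀, hj₀⟩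
              exact ⟨j₀, hj₀⟩
            exfalso
            refine hno j₀ ⟨x, hx, fun i0 => ?_⟩
            have hcm := (hm i0).2.2
            rw [hc] at hcm
            by_cases hex : ∃ i, mEntry A x i0 ∈ f i
            · simp only [dif_pos hex] at hcm
              have : hex.choose = j₀ := by
                have := hcm.trans hj₀
                exact Fin.succ_inj.1 this
              refine ⟨this ▸ hex.choose_spec, ?_⟩
              have hio := (hm i0).2.1
              exact ⟨hio.1, lt_of_lt_of_le hio.2 (hδle j₀)⟩
            · simp only [dif_neg hex] at hcm
              exact absurd (hcm.trans hj₀).symm (Fin.succ_ne_zero j₀)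
      have hNB : (Filter.generate (insert S (compl '' Bad))).NeBot :=
        Filter.generate_neBot_iff.2 hFIP
      obtain ⟨p, hp⟩ := @Ultrafilter.exists_le ℝ (Filter.generate (insert S (compl '' Bad))) hNB
      refine ⟨p, (hchar p).2 ⟨?_, ?_⟩⟩
      · exact hp (Filter.mem_generate_of_mem (Set.mem_insert _ _))
      · intro P hP
        exact hp (Filter.mem_generate_of_mem (Set.mem_insert_of_mem _ ⟨P, hP, rfl⟩))
  · -- semigroup property for finite matrices
    rintro u v B _hB p ⟨hpS, hp⟩ q ⟨hqS, hq⟩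
    constructor
    · rw [mem_uAdd']
      refine Filter.mem_of_superset hpS fun a ha => ?_
      exact Filter.mem_of_superset hqS fun b hb => hS.2.2 a ha b hb
    · intro P hP ε hε
      rw [mem_uAdd'] at hP
      obtain ⟨x, hx, hxe⟩ := hp {a | {b | a + b ∈ P} ∈ q} hP (ε / 2) (by linarith)
      have hQ : (⋂ i, {b | mEntry B x i + b ∈ P}) ∈ q :=
        Filter.iInter_mem.2 fun i => (hxe i).1
      obtain ⟨y, hy, hye⟩ := hq _ hQ (ε / 2) (by linarith)
      refine ⟨fun j => x j + y j, fun j => hS.2.2 _ (hx j) _ (hy j), fun i => ?_⟩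
      rw [mEntry_add']
      have h1 := (hye i).1
      rw [Set.mem_iInter] at h1
      have hxo := (hxe i).2
      have hyo := (hye i).2
      exact ⟨h1 i, by constructor <;> linarith [hxo.1, hxo.2, hyo.1, hyo.2]⟩
end

section
/- Let S be a dense subsemigroup of ((0,∞),+) and let A be an admissible matrix with rational entries. If q ∈ βℕ and p ∈ I₀(A;S), then q·p ∈ I₀(A;S). -/
lemma nsmul_mem_S {S : Set ℝ} (hS : IsPosSubsemigroup S) :
    ∀ n : ℕ, 0 < n → ∀ x ∈ S, (n : ℝ) * x ∈ S := by
  intro n hn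
  induction n with
  | zero => omega
  | succ k ih =>
    intro x hx
    rcases Nat.eq_zero_or_pos k with hk | hk
    · subst hk; simpa using hx
    · have := ih hk x hx
      have h2 := hS.2.2 _ this _ hx
      have : ((k : ℝ) + 1) * x = (k : ℝ) * x + x := by ring
      push_cast
      rw [this]; exact h2

lemma mEntry_smul {ι κ : Type} {A : ι → κ → ℚ} (hA : Admissible A)
    (c : ℝ) (x : κ → ℝ) (i : ι) :
    mEntry A (fun j => c * x j) i = c * mEntry A x i := by
  unfold mEntry
  rw [mul_finsum]
  congr 1; ext j; ring

lemma mem_actU {q : Ultrafilter ℕ} {p : Ultrafilter ℝ} {B : Set ℝ} :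
    B ∈ actU q p ↔ {n : ℕ | {x : ℝ | (n : ℝ) * x ∈ B} ∈ p} ∈ q := by
  rw [actU, ← Ultrafilter.mem_coe,
    show ((q.bind fun n => p.map fun x => (n:ℝ) * x : Ultrafilter ℝ) : Filter ℝ)
      = Filter.bind (q : Filter ℕ) (fun n => ((p.map fun x => (n:ℝ) * x : Ultrafilter ℝ) : Filter ℝ)) from rfl,
    Filter.mem_bind']
  simp [Ultrafilter.mem_map, Set.preimage]

/-- For a dense subsemigroup `S` of `((0,∞),+)` and an admissible
matrix `A`: if `q ∈ βℕ` and `p ∈ I₀(A;S)` then `q·p ∈ I₀(A;S)`. -/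
theorem stmt5 {ι κ : Type} [Countable ι] [Countable κ] (S : Set ℝ)
    (hS : IsPosSubsemigroup S) (hd : DenseNearZero S)
    (A : ι → κ → ℚ) (hA : Admissible A)
    (q : Ultrafilter ℕ) (hq : {n : ℕ | 0 < n} ∈ q)
    (p : Ultrafilter ℝ) (hp : p ∈ I0Set S A) :
    actU q p ∈ I0Set S A := by
  obtain ⟨hpS, hpI⟩ := hp
  constructor
  · rw [mem_actU]
    apply q.mem_of_superset hq
    intro n hn
    apply p.mem_of_superset hpS
    intro x hx
    exact nsmul_mem_S hS n hn x hx
  · intro P hP ε hε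
    rw [mem_actU] at hP
    obtain ⟨n, hn1, hn2⟩ := Filter.nonempty_of_mem (q.toFilter.inter_sets hP hq)
    simp only [Set.mem_setOf_eq] at hn1 hn2
    have hnpos : (0 : ℝ) < n := by exact_mod_cast hn2
    obtain ⟨x, hxS, hxi⟩ := hpI _ hn1 (ε / n) (by positivity)
    refine ⟨fun j => (n : ℝ) * x j, fun j => nsmul_mem_S hS n hn2 _ (hxS j), fun i => ?_⟩
    rw [mEntry_smul hA]
    obtain ⟨h1, h2, h3⟩ := hxi i
    refine ⟨h1, by positivity, ?_⟩
    calc (n : ℝ) * mEntry A x i < (n : ℝ) * (ε / n) := by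
          exact mul_lt_mul_of_pos_left h3 hnpos
      _ = ε := by field_simp
end

section
/- Let S be a dense subsemigroup of ((0,∞),+), let u,v ∈ ℕ, and let D be a u×v image partition regular matrix. Let α and δ be positive ordinals, let A be an α×v matrix all of whose rows are rows of D, and let B be an α×δ matrix which is image partition regular near zero over S. If r ∈ I₀(A;S) and p ∈ I₀(B;S), then r + p ∈ I₀(C;S), where C = (A B) is the α×(v+δ) matrix obtained by placing A and B side by side. -/
open Function in
theorem finsum_sum_elim_aux {α β : Type} (f : α → ℝ) (g : β → ℝ)
    (hf : (support f).Finite) (hg : (support g).Finite) :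
    ∑ᶠ j : α ⊕ β, Sum.elim f g j = (∑ᶠ a, f a) + ∑ᶠ b, g b := by
  rw [finsum_eq_sum f hf, finsum_eq_sum g hg,
    finsum_eq_sum_of_support_subset (Sum.elim f g) (s := hf.toFinset.disjSum hg.toFinset)]
  · rw [Finset.sum_sumElim]
  · rintro (a | b) h
    · exact Finset.mem_coe.2 (Finset.inl_mem_disjSum.2 (hf.mem_toFinset.2 h))
    · exact Finset.mem_coe.2 (Finset.inr_mem_disjSum.2 (hg.mem_toFinset.2 h))

theorem mem_uAdd_iff {r p : Ultrafilter ℝ} {P : Set ℝ} :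
    P ∈ uAdd r p ↔ {x | {y | x + y ∈ P} ∈ p} ∈ r := by
  simp [uAdd, Ultrafilter.bind, Ultrafilter.mem_map]
  rfl

theorem mEntry_sum_elim {ι κ : Type} {v : ℕ} (A : ι → Fin v → ℚ) (B : ι → κ → ℚ)
    (hBadm : ∀ i, (Function.support (B i)).Finite) (x : Fin v → ℝ) (y : κ → ℝ) (i : ι) :
    mEntry (fun i => Sum.elim (A i) (B i)) (Sum.elim x y) i
      = mEntry A x i + mEntry B y i := by
  have h1 : (fun j : Fin v ⊕ κ => ((Sum.elim (A i) (B i) j : ℚ) : ℝ) * Sum.elim x y j)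
      = Sum.elim (fun j => (A i j : ℝ) * x j) (fun j => (B i j : ℝ) * y j) := by
    funext j; cases j <;> rfl
  unfold mEntry
  rw [h1, finsum_sum_elim_aux]
  · exact Set.toFinite _
  · refine ((hBadm i).subset ?_)
    intro j hj
    simp only [Function.mem_support] at hj ⊢
    intro h0
    exact hj (by simp [h0])

/-- Let `D` be a finite image partition regular matrix, `A` a matrix
all of whose rows are rows of `D`, and `B` a matrix image partition regular near zero
over `S` (with the same row index as `A`). If `r ∈ I₀(A;S)` and `p ∈ I₀(B;S)` then
`r + p ∈ I₀((A B);S)`. -/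
theorem stmt14 {ι κ : Type} [Countable ι] [Countable κ] [Nonempty ι] [Nonempty κ]
    (S : Set ℝ) (hS : IsPosSubsemigroup S) (hd : DenseNearZero S)
    (u v : ℕ) (D : Fin u → Fin v → ℚ) (hD : IPRoverNat D)
    (A : ι → Fin v → ℚ) (hA : ∀ i, ∃ i', A i = D i')
    (B : ι → κ → ℚ) (hBadm : Admissible B) (hB : IPRNearZero S B)
    (r p : Ultrafilter ℝ) (hr : r ∈ I0Set S A) (hp : p ∈ I0Set S B) :
    uAdd r p ∈ I0Set S (fun i => Sum.elim (A i) (B i)) := by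
  refine ⟨?_, ?_⟩
  · rw [mem_uAdd_iff]
    refine Filter.mem_of_superset hr.1 fun a ha => ?_
    exact Filter.mem_of_superset hp.1 fun b hb => hS.2.2 a ha b hb
  · intro P hP ε hε
    rw [mem_uAdd_iff] at hP
    obtain ⟨x, hxS, hxR⟩ := hr.2 _ hP (ε / 2) (by linarith)
    classical
    set s : Finset (Fin u) :=
      Finset.univ.filter (fun i' => {y : ℝ | mEntry D x i' + y ∈ P} ∈ p) with hs
    have hQ : (⋂ i' ∈ s, {y : ℝ | mEntry D x i' + y ∈ P}) ∈ p :=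
      (Filter.biInter_finset_mem s).2 fun i' hi' => (Finset.mem_filter.1 hi').2
    obtain ⟨y, hyS, hyQ⟩ := hp.2 _ hQ (ε / 2) (by linarith)
    refine ⟨Sum.elim x y, fun j => by cases j <;> simp [hxS, hyS], fun i => ?_⟩
    rw [mEntry_sum_elim A B hBadm.2]
    obtain ⟨i', hi'⟩ := hA i
    have hAD : mEntry A x i = mEntry D x i' := by unfold mEntry; rw [hi']
    have ha := hxR i
    have hb := hyQ i
    have hmem : i' ∈ s := by
      have := ha.1
      rw [hAD] at this
      exact Finset.mem_filter.2 ⟨Finset.mem_univ _, this⟩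
    have hbP : mEntry B y i ∈ {y : ℝ | mEntry D x i' + y ∈ P} :=
      Set.mem_iInter₂.1 hb.1 i' hmem
    constructor
    · have : mEntry D x i' + mEntry B y i ∈ P := hbP
      rwa [hAD]
    · have h1 := ha.2
      have h2 := hb.2
      simp only [Set.mem_Ioo] at h1 h2 ⊢
      constructor <;> linarith [h1.1, h1.2, h2.1, h2.2]
end
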